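/- Let G be a graph on n vertices with claw number at most k − 1 (i.e., K_{1,k}-free), and let S be a maximal independent set of G. Choose i uniformly at random from {0, 1, …, ⌊log₂ k⌋} and then include each vertex of S independently with probability 2^{−i} to form I ⊆ S. Then every vertex w ∉ S satisfies Pr[|N(w) ∩ I| = 1] ≥ c/(⌊log₂ k⌋ + 1) for the absolute constant c = 0.02, and every v ∈ S satisfies Pr[v ∈ I] ≥ 1/(⌊log₂ k⌋ + 1). Consequently there exists a set I* ⊆ S such that at least c·n/(⌊log₂ k⌋ + 1) vertices of G have exactly one neighbor in I* or belong to I*. -/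

import Mathlib

open Finset

/-- `G` is `K_{1,k}`-free: it contains no induced star `K_{1,k}`, i.e. no vertex `v`
with `k` pairwise nonadjacent neighbors. -/
def K1kFree {V : Type} (G : SimpleGraph V) (k : ℕ) : Prop :=
  ¬ ∃ (v : V) (T : Finset V), T.card = k ∧ v ∉ T ∧ (∀ u ∈ T, G.Adj v u) ∧
      ∀ u ∈ T, ∀ w ∈ T, u ≠ w → ¬ G.Adj u w

/-- The key probabilistic step for CFCN coloring of $K_{1,k}$-free graphs: picking
$i$ uniformly from $\{0,\dots,\lfloor\log_2 k\rfloor\}$ and then each vertex of a maximal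
independent set $S$ independently with probability $2^{-i}$, every vertex outside $S$
has exactly one chosen neighbor with probability at least $0.02/(\lfloor\log_2 k\rfloor+1)$
(the probability being given by its explicit formula), every vertex of $S$ is chosen with
probability at least $1/(\lfloor\log_2 k\rfloor+1)$, and consequently some $I^* \subseteq S$
takes care of at least $0.02\, n/(\lfloor\log_2 k\rfloor+1)$ vertices. -/

lemma aux_exp (m : ℕ) (hm : 1 ≤ m) : Real.exp (-1) ≤ (1 - (m:ℝ)⁻¹) ^ (m - 1) := by
  rcases eq_or_lt_of_le hm with h | h
  · simp [← h]
  · have h2 : 2 ≤ m := h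
    have hm1 : (0:ℝ) < (m:ℝ) - 1 := by
      have : (2:ℝ) ≤ m := by exact_mod_cast h2
      linarith
    have hmpos : (0:ℝ) < m := by linarith
    set t : ℝ := ((m:ℝ) - 1)⁻¹ with ht
    have htpos : 0 < t := inv_pos.mpr hm1
    have h1 : 1 + t ≤ Real.exp t := by linarith [Real.add_one_le_exp t]
    have hbase : (0:ℝ) ≤ 1 - (m:ℝ)⁻¹ := by
      rw [sub_nonneg]
      exact inv_le_one_of_one_le₀ (by exact_mod_cast hm)
    have key : (1:ℝ) ≤ (1 - (m:ℝ)⁻¹) ^ (m-1) * Real.exp 1 := by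
      have hne : ((m:ℝ) - 1) ≠ 0 := ne_of_gt hm1
      have hne2 : ((m:ℝ)) ≠ 0 := ne_of_gt hmpos
      have hprod : (1 - (m:ℝ)⁻¹) * (1 + t) = 1 := by
        rw [ht]
        field_simp
        ring
      calc (1:ℝ) = ((1 - (m:ℝ)⁻¹) * (1 + t)) ^ (m-1) := by rw [hprod]; simp
        _ = (1 - (m:ℝ)⁻¹) ^ (m-1) * (1 + t) ^ (m-1) := by rw [mul_pow]
        _ ≤ (1 - (m:ℝ)⁻¹) ^ (m-1) * Real.exp t ^ (m-1) := by
            apply mul_le_mul_of_nonneg_left _ (pow_nonneg hbase _)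
            exact pow_le_pow_left₀ (by linarith) h1 _
        _ = (1 - (m:ℝ)⁻¹) ^ (m-1) * Real.exp 1 := by
            rw [← Real.exp_nat_mul]
            congr 2
            rw [ht, Nat.cast_sub hm]
            push_cast
            field_simp
    rw [Real.exp_neg]
    rw [inv_le_iff_one_le_mul₀ (Real.exp_pos 1)]
    linarith [key]

lemma core_bound (d : ℕ) (hd : 1 ≤ d) :
    (0.02:ℝ) ≤ (d:ℝ) * ((2:ℝ)⁻¹ ^ (Nat.log 2 d) * (1 - (2:ℝ)⁻¹ ^ (Nat.log 2 d)) ^ (d - 1)) := by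
  set i := Nat.log 2 d with hi
  set m := 2 ^ i with hm
  have hmd : m ≤ d := Nat.pow_log_le_self 2 (by omega)
  have hdm : d < 2 * m := by
    have h' := Nat.lt_pow_succ_log_self (b := 2) (by norm_num) d
    rw [Nat.succ_eq_add_one, ← hi, pow_succ] at h'
    omega
  have hm1 : 1 ≤ m := Nat.one_le_two_pow
  have hp : (2:ℝ)⁻¹ ^ i = ((m:ℝ))⁻¹ := by
    rw [hm]; push_cast; rw [← inv_pow]
  rw [hp]
  have hmpos : (0:ℝ) < m := by exact_mod_cast hm1
  have hbase0 : (0:ℝ) ≤ 1 - (m:ℝ)⁻¹ := by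
    rw [sub_nonneg]; exact inv_le_one_of_one_le₀ (by exact_mod_cast hm1)
  have hbase1 : (1 - (m:ℝ)⁻¹) ≤ 1 := by
    have : (0:ℝ) ≤ (m:ℝ)⁻¹ := by positivity
    linarith
  have hexp : Real.exp (-1) ^ 2 ≤ (1 - (m:ℝ)⁻¹) ^ (d - 1) := by
    have h1 : (1 - (m:ℝ)⁻¹) ^ (d-1) ≥ (1 - (m:ℝ)⁻¹) ^ (2*(m-1)) :=
      pow_le_pow_of_le_one hbase0 hbase1 (by omega)
    have h2 : (1 - (m:ℝ)⁻¹) ^ (2*(m-1)) = ((1 - (m:ℝ)⁻¹) ^ (m-1))^2 := by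
      rw [← pow_mul, mul_comm]
    have h3 := aux_exp m hm1
    calc Real.exp (-1) ^ 2 ≤ ((1 - (m:ℝ)⁻¹) ^ (m-1))^2 :=
          pow_le_pow_left₀ (Real.exp_nonneg _) h3 2
      _ = (1 - (m:ℝ)⁻¹) ^ (2*(m-1)) := h2.symm
      _ ≤ (1 - (m:ℝ)⁻¹) ^ (d-1) := h1
  have hdp : (1:ℝ) ≤ (d:ℝ) * (m:ℝ)⁻¹ := by
    rw [le_mul_inv_iff₀ hmpos]
    simpa using (by exact_mod_cast hmd : (m:ℝ) ≤ d)
  have h002 : (0.02:ℝ) ≤ Real.exp (-1) ^ 2 := by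
    have he : Real.exp 1 < 2.7182818286 := Real.exp_one_lt_d9
    have hep : 0 < Real.exp 1 := Real.exp_pos 1
    have hpos : 0 < Real.exp 1 ^ 2 := by positivity
    rw [Real.exp_neg, inv_pow, inv_eq_one_div, le_div_iff₀ hpos]
    nlinarith
  calc (0.02:ℝ) ≤ Real.exp (-1)^2 := h002
    _ ≤ 1 * (1 - (m:ℝ)⁻¹) ^ (d-1) := by rw [one_mul]; exact hexp
    _ ≤ ((d:ℝ) * (m:ℝ)⁻¹) * (1 - (m:ℝ)⁻¹) ^ (d-1) := by
        apply mul_le_mul_of_nonneg_right hdp (pow_nonneg hbase0 _)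
    _ = (d:ℝ) * ((m:ℝ)⁻¹ * (1 - (m:ℝ)⁻¹) ^ (d-1)) := by ring

section
variable {V : Type} [DecidableEq V]

lemma CFCN_powerset_split (S F : Finset V) (hF : F ⊆ S) (h : Finset V → ℝ) :
    ∑ A ∈ S.powerset, h A = ∑ B ∈ F.powerset, ∑ C ∈ (S \ F).powerset, h (B ∪ C) := by
  rw [← Finset.sum_product']
  apply Finset.sum_nbij' (i := fun A => (A ∩ F, A \ F)) (j := fun BC => BC.1 ∪ BC.2)
  · intro A hA
    rw [Finset.mem_powerset] at hA
    rw [Finset.mem_product, Finset.mem_powerset, Finset.mem_powerset]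
    exact ⟨Finset.inter_subset_right, Finset.sdiff_subset_sdiff hA (le_refl _)⟩
  · rintro ⟨B, C⟩ hBC
    rw [Finset.mem_product, Finset.mem_powerset, Finset.mem_powerset] at hBC
    rw [Finset.mem_powerset]
    exact Finset.union_subset (hBC.1.trans hF) (hBC.2.trans (Finset.sdiff_subset))
  · intro A hA
    ext a
    simp only [Finset.mem_union, Finset.mem_inter, Finset.mem_sdiff]
    tauto
  · rintro ⟨B, C⟩ hBC
    rw [Finset.mem_product, Finset.mem_powerset, Finset.mem_powerset] at hBC
    obtain ⟨hB, hC⟩ := hBC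
    have hCF : ∀ a ∈ C, a ∉ F := fun a ha => (Finset.mem_sdiff.mp (hC ha)).2
    have e1 : (B ∪ C) ∩ F = B := by
      ext a; simp only [Finset.mem_inter, Finset.mem_union]
      constructor
      · rintro ⟨h1 | h1, h2⟩
        · exact h1
        · exact absurd h2 (hCF a h1)
      · intro h; exact ⟨Or.inl h, hB h⟩
    have e2 : (B ∪ C) \ F = C := by
      ext a; simp only [Finset.mem_sdiff, Finset.mem_union]
      constructor
      · rintro ⟨h1 | h1, h2⟩
        · exact absurd (hB h1) h2
        · exact h1
      · intro h; exact ⟨Or.inr h, hCF a h⟩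
    simp [e1, e2]
  · intro A hA
    congr 1
    ext a
    simp only [Finset.mem_union, Finset.mem_inter, Finset.mem_sdiff]
    tauto

lemma CFCN_sum_mu (S : Finset V) (p : ℝ) :
    ∑ A ∈ S.powerset, p ^ A.card * (1 - p) ^ (S \ A).card = 1 := by
  have h := Finset.prod_add (fun _ : V => p) (fun _ : V => (1 - p)) S
  simp only [Finset.prod_const] at h
  rw [← h]
  simp

lemma CFCN_marg (S F : Finset V) (hF : F ⊆ S) (φ : Finset V → ℝ) (p : ℝ) :
    ∑ A ∈ S.powerset, φ (A ∩ F) * (p ^ A.card * (1 - p) ^ (S \ A).card)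
      = ∑ B ∈ F.powerset, φ B * (p ^ B.card * (1 - p) ^ (F \ B).card) := by
  rw [CFCN_powerset_split S F hF]
  apply Finset.sum_congr rfl
  intro B hB
  rw [Finset.mem_powerset] at hB
  have key : ∀ C ∈ (S \ F).powerset,
      φ ((B ∪ C) ∩ F) * (p ^ (B ∪ C).card * (1 - p) ^ (S \ (B ∪ C)).card)
        = (φ B * (p ^ B.card * (1 - p) ^ (F \ B).card))
            * (p ^ C.card * (1 - p) ^ ((S \ F) \ C).card) := by
    intro C hC
    rw [Finset.mem_powerset] at hC
    have hCF : ∀ a ∈ C, a ∉ F := fun a ha => (Finset.mem_sdiff.mp (hC ha)).2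
    have hCS : ∀ a ∈ C, a ∈ S := fun a ha => (Finset.mem_sdiff.mp (hC ha)).1
    have hdisj : Disjoint B C := by
      rw [Finset.disjoint_left]
      intro a haB haC
      exact hCF a haC (hB haB)
    have e1 : (B ∪ C) ∩ F = B := by
      ext a; simp only [Finset.mem_inter, Finset.mem_union]
      constructor
      · rintro ⟨h1 | h1, h2⟩
        · exact h1
        · exact absurd h2 (hCF a h1)
      · intro h; exact ⟨Or.inl h, hB h⟩
    have ecard : (B ∪ C).card = B.card + C.card := Finset.card_union_of_disjoint hdisj
    have e2 : S \ (B ∪ C) = (F \ B) ∪ ((S \ F) \ C) := by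
      ext a
      simp only [Finset.mem_sdiff, Finset.mem_union]
      constructor
      · rintro ⟨h1, h2⟩
        push_neg at h2
        by_cases hFa : a ∈ F
        · exact Or.inl ⟨hFa, h2.1⟩
        · exact Or.inr ⟨⟨h1, hFa⟩, h2.2⟩
      · rintro (⟨h1, h2⟩ | ⟨⟨h1, h1'⟩, h2⟩)
        · refine ⟨hF h1, ?_⟩
          push_neg
          exact ⟨h2, fun hc => hCF a hc h1⟩
        · refine ⟨h1, ?_⟩
          push_neg
          exact ⟨fun hb => h1' (hB hb), h2⟩
    have hd2 : Disjoint (F \ B) ((S \ F) \ C) := by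
      rw [Finset.disjoint_left]
      intro a ha1 ha2
      exact (Finset.mem_sdiff.mp (Finset.mem_sdiff.mp ha2).1).2 (Finset.mem_sdiff.mp ha1).1
    have e2card : (S \ (B ∪ C)).card = (F \ B).card + ((S \ F) \ C).card := by
      rw [e2, Finset.card_union_of_disjoint hd2]
    rw [e1, ecard, e2card, pow_add, pow_add]
    ring
  rw [Finset.sum_congr rfl key, ← Finset.mul_sum, CFCN_sum_mu, mul_one]

lemma CFCN_expect_mem (S : Finset V) (v : V) (hv : v ∈ S) (p : ℝ) :
    ∑ A ∈ S.powerset, (if v ∈ A then (1:ℝ) else 0) * (p ^ A.card * (1 - p) ^ (S \ A).card)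
      = p := by
  have h := CFCN_marg S {v} (Finset.singleton_subset_iff.mpr hv)
      (fun B => if v ∈ B then (1:ℝ) else 0) p
  have congr1 : ∀ A ∈ S.powerset,
      (if v ∈ A then (1:ℝ) else 0) * (p ^ A.card * (1 - p) ^ (S \ A).card)
        = (if v ∈ A ∩ {v} then (1:ℝ) else 0) * (p ^ A.card * (1 - p) ^ (S \ A).card) := by
    intro A _
    congr 1
    simp [Finset.mem_inter]
  have hps : ({v} : Finset V).powerset = {∅, {v}} := by
    rw [show ({v} : Finset V) = insert v ∅ from rfl, Finset.powerset_insert,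
      Finset.powerset_empty, Finset.image_singleton]
    rfl
  rw [Finset.sum_congr rfl congr1, h, hps, Finset.sum_insert (by exact fun hc => (Finset.singleton_ne_empty v) ((Finset.mem_singleton.mp hc).symm))]
  simp

lemma CFCN_expect_one (S F : Finset V) (hF : F ⊆ S) (p : ℝ) (hp0 : 0 ≤ p) (hp1 : p ≤ 1) :
    (F.card : ℝ) * (p * (1 - p) ^ (F.card - 1)) ≤
      ∑ A ∈ S.powerset,
        (if (A ∩ F).card = 1 then (1:ℝ) else 0) * (p ^ A.card * (1 - p) ^ (S \ A).card) := by
  rw [CFCN_marg S F hF (fun B => if B.card = 1 then (1:ℝ) else 0) p]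
  have hsub : Finset.powersetCard 1 F ⊆ F.powerset := by
    intro B hB
    rw [Finset.mem_powersetCard] at hB
    exact Finset.mem_powerset.mpr hB.1
  have hnn : ∀ B ∈ F.powerset, B ∉ Finset.powersetCard 1 F →
      0 ≤ (if B.card = 1 then (1:ℝ) else 0) * (p ^ B.card * (1 - p) ^ (F \ B).card) := by
    intro B _ _
    have : (0:ℝ) ≤ 1 - p := by linarith
    positivity
  refine le_trans ?_ (Finset.sum_le_sum_of_subset_of_nonneg hsub hnn)
  have heval : ∀ B ∈ Finset.powersetCard 1 F,
      (if B.card = 1 then (1:ℝ) else 0) * (p ^ B.card * (1 - p) ^ (F \ B).card)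
        = p * (1 - p) ^ (F.card - 1) := by
    intro B hB
    rw [Finset.mem_powersetCard] at hB
    rw [if_pos hB.2, hB.2, Finset.card_sdiff_of_subset hB.1, hB.2, pow_one, one_mul]
  rw [Finset.sum_congr rfl heval, Finset.sum_const, Finset.card_powersetCard,
    Nat.choose_one_right, nsmul_eq_mul]

end
theorem random_independent_subset_step {V : Type} [Fintype V] [DecidableEq V]
    (G : SimpleGraph V) [DecidableRel G.Adj] (k : ℕ) (hk : 2 ≤ k)
    (hfree : K1kFree G k) (S : Finset V)
    (hind : ∀ u ∈ S, ∀ v ∈ S, ¬ G.Adj u v)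
    (hmaximal : ∀ v : V, v ∉ S → ∃ u ∈ S, G.Adj v u) :
    (∀ w : V, w ∉ S →
      (0.02 : ℝ) / (Nat.log 2 k + 1) ≤
        (1 / (Nat.log 2 k + 1 : ℝ)) *
          ∑ i ∈ Finset.range (Nat.log 2 k + 1),
            ∑ s ∈ G.neighborFinset w ∩ S,
              (2 : ℝ)⁻¹ ^ i * ∏ y ∈ (G.neighborFinset w ∩ S).erase s, (1 - (2 : ℝ)⁻¹ ^ i)) ∧
    ((1 : ℝ) / (Nat.log 2 k + 1 : ℝ) ≤
      (1 / (Nat.log 2 k + 1 : ℝ)) *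
        ∑ i ∈ Finset.range (Nat.log 2 k + 1), (2 : ℝ)⁻¹ ^ i) ∧
    (∃ I ⊆ S, (0.02 : ℝ) * Fintype.card V / (Nat.log 2 k + 1) ≤
      ((Finset.univ.filter
        (fun x : V => x ∈ I ∨ (G.neighborFinset x ∩ I).card = 1)).card : ℝ)) := by
  classical
  set L := Nat.log 2 k with hL
  have hLpos : (0:ℝ) < (L:ℝ) + 1 := by positivity
  have hp0 : ∀ i : ℕ, (0:ℝ) ≤ (2:ℝ)⁻¹ ^ i := fun i => by positivity
  have hp1 : ∀ i : ℕ, (2:ℝ)⁻¹ ^ i ≤ 1 := fun i => pow_le_one₀ (by norm_num) (by norm_num)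
  have hp1' : ∀ i : ℕ, (0:ℝ) ≤ 1 - (2:ℝ)⁻¹ ^ i := fun i => by linarith [hp1 i]
  -- degree facts
  have hFfacts : ∀ w : V, w ∉ S →
      1 ≤ (G.neighborFinset w ∩ S).card ∧ (G.neighborFinset w ∩ S).card ≤ k := by
    intro w hw
    constructor
    · obtain ⟨u, huS, hadj⟩ := hmaximal w hw
      have hu : u ∈ G.neighborFinset w ∩ S := by
        rw [Finset.mem_inter, SimpleGraph.mem_neighborFinset]; exact ⟨hadj, huS⟩
      exact Finset.card_pos.mpr ⟨u, hu⟩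
    · by_contra hcon
      push_neg at hcon
      obtain ⟨T, hTsub, hTcard⟩ := Finset.exists_subset_card_eq (le_of_lt hcon)
      apply hfree
      refine ⟨w, T, hTcard, ?_, ?_, ?_⟩
      · intro hwT
        have h := hTsub hwT
        rw [Finset.mem_inter, SimpleGraph.mem_neighborFinset] at h
        exact G.irrefl h.1
      · intro u huT
        have h := hTsub huT
        rw [Finset.mem_inter, SimpleGraph.mem_neighborFinset] at h
        exact h.1
      · intro u huT w' hw'T _
        have hu := (Finset.mem_inter.mp (hTsub huT)).2
        have hw' := (Finset.mem_inter.mp (hTsub hw'T)).2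
        exact hind u hu w' hw'
  -- key lower bound on the sum over i
  have hkey : ∀ w : V, w ∉ S →
      (0.02:ℝ) ≤ ∑ i ∈ Finset.range (L+1),
        ((G.neighborFinset w ∩ S).card : ℝ) *
          ((2:ℝ)⁻¹^i * (1 - (2:ℝ)⁻¹^i)^((G.neighborFinset w ∩ S).card - 1)) := by
    intro w hw
    obtain ⟨hd1, hdk⟩ := hFfacts w hw
    set d := (G.neighborFinset w ∩ S).card with hd
    have hmem : Nat.log 2 d ∈ Finset.range (L+1) :=
      Finset.mem_range.mpr (Nat.lt_succ_of_le (Nat.log_mono_right hdk))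
    have hnn : ∀ i ∈ Finset.range (L+1),
        (0:ℝ) ≤ (d:ℝ) * ((2:ℝ)⁻¹^i * (1-(2:ℝ)⁻¹^i)^(d-1)) := by
      intro i _
      have h1 := hp1' i
      have h0 := hp0 i
      positivity
    exact le_trans (core_bound d hd1) (Finset.single_le_sum hnn hmem)
  -- inner sum evaluation
  have hinner : ∀ (F : Finset V) (p : ℝ),
      ∑ s ∈ F, p * ∏ y ∈ F.erase s, (1 - p) = (F.card:ℝ) * (p * (1-p)^(F.card - 1)) := by
    intro F p
    have h : ∀ s ∈ F, p * ∏ y ∈ F.erase s, (1-p) = p * (1-p)^(F.card-1) := by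
      intro s hs
      rw [Finset.prod_const, Finset.card_erase_of_mem hs]
    rw [Finset.sum_congr rfl h, Finset.sum_const, nsmul_eq_mul]
  refine ⟨?_, ?_, ?_⟩
  · -- part 1
    intro w hw
    rw [Finset.sum_congr rfl
      (fun i (_ : i ∈ Finset.range (L+1)) => hinner (G.neighborFinset w ∩ S) ((2:ℝ)⁻¹^i))]
    rw [div_eq_mul_one_div, mul_comm (0.02:ℝ)]
    exact mul_le_mul_of_nonneg_left (hkey w hw) (by positivity)
  · -- part 2
    have hsum : (1:ℝ) ≤ ∑ i ∈ Finset.range (L+1), (2:ℝ)⁻¹^i := by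
      have h0 : (0:ℕ) ∈ Finset.range (L+1) := Finset.mem_range.mpr (Nat.succ_pos L)
      have h := Finset.single_le_sum (f := fun i : ℕ => (2:ℝ)⁻¹^i) (fun i _ => hp0 i) h0
      simpa using h
    calc (1:ℝ)/((L:ℝ)+1) = (1/((L:ℝ)+1)) * 1 := by ring
      _ ≤ _ := mul_le_mul_of_nonneg_left hsum (by positivity)
  · -- part 3
    set c : ℝ := 1/((L:ℝ)+1) with hc
    have hcpos : 0 < c := by rw [hc]; positivity
    set q : ℕ → ℝ := fun i => (2:ℝ)⁻¹^i with hq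
    set μ : ℕ → Finset V → ℝ := fun i A => (q i)^A.card * (1 - q i)^((S \ A).card) with hμ
    have hμnn : ∀ i A, 0 ≤ μ i A := by
      intro i A
      have h1 := hp1' i
      have h0 := hp0 i
      rw [hμ]
      positivity
    have hμsum : ∀ i, ∑ A ∈ S.powerset, μ i A = 1 := fun i => CFCN_sum_mu S (q i)
    set cnt : Finset V → ℝ := fun A => ((Finset.univ.filter
        (fun x : V => x ∈ A ∨ (G.neighborFinset x ∩ A).card = 1)).card : ℝ) with hcnt
    have hcnt_eq : ∀ A : Finset V, cnt A = ∑ x : V,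
        (if x ∈ A ∨ (G.neighborFinset x ∩ A).card = 1 then (1:ℝ) else 0) := by
      intro A
      rw [hcnt]
      simp only [Finset.card_filter]
      push_cast
      rfl
    have hcnt_nn : ∀ A, 0 ≤ cnt A := fun A => Nat.cast_nonneg _
    set f : ℕ → Finset V → V → ℝ := fun i A x =>
      c * μ i A * (if x ∈ A ∨ (G.neighborFinset x ∩ A).card = 1 then (1:ℝ) else 0) with hf
    set E : ℝ := ∑ i ∈ Finset.range (L+1), ∑ A ∈ S.powerset, c * μ i A * cnt A with hE
    -- swap sums
    have hE1 : E = ∑ x : V, ∑ i ∈ Finset.range (L+1), ∑ A ∈ S.powerset, f i A x := by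
      rw [hE]
      rw [Finset.sum_congr rfl (fun i (_ : i ∈ Finset.range (L+1)) =>
        Finset.sum_congr rfl (fun A (_ : A ∈ S.powerset) => by
          rw [hcnt_eq A, Finset.mul_sum]))]
      rw [Finset.sum_congr rfl (fun i (_ : i ∈ Finset.range (L+1)) => Finset.sum_comm)]
      exact Finset.sum_comm
    -- per-vertex lower bound
    have hper : ∀ x : V, (0.02:ℝ) * c ≤
        ∑ i ∈ Finset.range (L+1), ∑ A ∈ S.powerset, f i A x := by
      intro x
      by_cases hxS : x ∈ S
      · -- x ∈ S
        have step : ∀ i ∈ Finset.range (L+1), c * q i ≤ ∑ A ∈ S.powerset, f i A x := by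
          intro i _
          have hmono : ∀ A ∈ S.powerset,
              c * ((if x ∈ A then (1:ℝ) else 0) * μ i A) ≤ f i A x := by
            intro A _
            simp only [hf]
            by_cases hxA : x ∈ A
            · rw [if_pos hxA, if_pos (Or.inl hxA)]
              exact le_of_eq (by ring)
            · rw [if_neg hxA]
              have hite : (0:ℝ) ≤ (if x ∈ A ∨ (G.neighborFinset x ∩ A).card = 1 then (1:ℝ) else 0) := by
                split <;> norm_num
              have h3 : 0 ≤ c * μ i A * (if x ∈ A ∨ (G.neighborFinset x ∩ A).card = 1 then (1:ℝ) else 0) :=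
                mul_nonneg (mul_nonneg hcpos.le (hμnn i A)) hite
              simpa using h3
          calc c * q i = c * ∑ A ∈ S.powerset,
                (if x ∈ A then (1:ℝ) else 0) * (q i ^ A.card * (1 - q i)^((S \ A).card)) := by
                  rw [CFCN_expect_mem S x hxS (q i)]
            _ = ∑ A ∈ S.powerset, c * ((if x ∈ A then (1:ℝ) else 0) * μ i A) := by
                  rw [Finset.mul_sum]
            _ ≤ ∑ A ∈ S.powerset, f i A x := Finset.sum_le_sum hmono
        have hsum1 : (1:ℝ) ≤ ∑ i ∈ Finset.range (L+1), q i := by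
          have h0 : (0:ℕ) ∈ Finset.range (L+1) := Finset.mem_range.mpr (Nat.succ_pos L)
          have h := Finset.single_le_sum (f := q) (fun i _ => hp0 i) h0
          simpa [hq] using h
        calc (0.02:ℝ) * c ≤ 1 * c := by nlinarith [hcpos.le]
          _ = c * 1 := by ring
          _ ≤ c * ∑ i ∈ Finset.range (L+1), q i := mul_le_mul_of_nonneg_left hsum1 hcpos.le
          _ = ∑ i ∈ Finset.range (L+1), c * q i := by rw [Finset.mul_sum]
          _ ≤ _ := Finset.sum_le_sum step
      · -- x ∉ S
        set F := G.neighborFinset x ∩ S with hF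
        have hFS : F ⊆ S := Finset.inter_subset_right
        have step : ∀ i ∈ Finset.range (L+1),
            c * ((F.card:ℝ) * (q i * (1 - q i)^(F.card - 1))) ≤ ∑ A ∈ S.powerset, f i A x := by
          intro i _
          have hmono : ∀ A ∈ S.powerset,
              c * ((if (A ∩ F).card = 1 then (1:ℝ) else 0) * μ i A) ≤ f i A x := by
            intro A hA
            rw [Finset.mem_powerset] at hA
            have hAF : A ∩ F = G.neighborFinset x ∩ A := by
              ext a
              simp only [hF, Finset.mem_inter]
              constructor
              · rintro ⟨h1, h2, h3⟩; exact ⟨h2, h1⟩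
              · rintro ⟨h1, h2⟩; exact ⟨h2, h1, hA h2⟩
            simp only [hf]
            rw [hAF]
            by_cases h1 : (G.neighborFinset x ∩ A).card = 1
            · rw [if_pos h1, if_pos (Or.inr h1)]
              exact le_of_eq (by ring)
            · rw [if_neg h1]
              have hite : (0:ℝ) ≤ (if x ∈ A ∨ (G.neighborFinset x ∩ A).card = 1 then (1:ℝ) else 0) := by
                split <;> norm_num
              have h3 : 0 ≤ c * μ i A * (if x ∈ A ∨ (G.neighborFinset x ∩ A).card = 1 then (1:ℝ) else 0) :=
                mul_nonneg (mul_nonneg hcpos.le (hμnn i A)) hite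
              simpa using h3
          have hexp := CFCN_expect_one S F hFS (q i) (hp0 i) (hp1 i)
          calc c * ((F.card:ℝ) * (q i * (1 - q i)^(F.card - 1)))
              ≤ c * ∑ A ∈ S.powerset,
                (if (A ∩ F).card = 1 then (1:ℝ) else 0) * (q i ^ A.card * (1 - q i)^((S \ A).card)) :=
                mul_le_mul_of_nonneg_left hexp hcpos.le
            _ = ∑ A ∈ S.powerset, c * ((if (A ∩ F).card = 1 then (1:ℝ) else 0) * μ i A) := by
                rw [Finset.mul_sum]
            _ ≤ ∑ A ∈ S.powerset, f i A x := Finset.sum_le_sum hmono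
        calc (0.02:ℝ) * c = c * 0.02 := by ring
          _ ≤ c * ∑ i ∈ Finset.range (L+1),
              (F.card:ℝ) * (q i * (1 - q i)^(F.card - 1)) :=
              mul_le_mul_of_nonneg_left (hkey x hxS) hcpos.le
          _ = ∑ i ∈ Finset.range (L+1),
              c * ((F.card:ℝ) * (q i * (1 - q i)^(F.card - 1))) := by rw [Finset.mul_sum]
          _ ≤ _ := Finset.sum_le_sum step
    -- lower bound on E
    have Elb : (0.02:ℝ) * (Fintype.card V) / ((L:ℝ)+1) ≤ E := by
      rw [hE1]
      have h := Finset.sum_le_sum (fun x (_ : x ∈ (Finset.univ : Finset V)) => hper x)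
      rw [Finset.sum_const, Finset.card_univ, nsmul_eq_mul] at h
      calc (0.02:ℝ) * (Fintype.card V) / ((L:ℝ)+1)
          = (Fintype.card V : ℝ) * (0.02 * c) := by rw [hc]; field_simp
        _ ≤ _ := h
    -- upper bound on E by the max
    have hne : (S.powerset).Nonempty := ⟨∅, Finset.empty_mem_powerset S⟩
    set M : ℝ := S.powerset.sup' hne cnt with hM
    have Eub : E ≤ M := by
      have hstep : ∀ i ∈ Finset.range (L+1),
          ∑ A ∈ S.powerset, c * μ i A * cnt A ≤ c * M := by
        intro i _
        have h1 : ∀ A ∈ S.powerset, c * μ i A * cnt A ≤ c * μ i A * M := by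
          intro A hA
          exact mul_le_mul_of_nonneg_left (Finset.le_sup' cnt hA)
            (mul_nonneg hcpos.le (hμnn i A))
        calc ∑ A ∈ S.powerset, c * μ i A * cnt A
            ≤ ∑ A ∈ S.powerset, c * μ i A * M := Finset.sum_le_sum h1
          _ = (c * M) * ∑ A ∈ S.powerset, μ i A := by rw [Finset.mul_sum]; apply Finset.sum_congr rfl; intros; ring
          _ = c * M := by rw [hμsum i, mul_one]
      calc E ≤ ∑ i ∈ Finset.range (L+1), c * M := Finset.sum_le_sum hstep
        _ = ((L:ℝ)+1) * (c * M) := by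
            rw [Finset.sum_const, Finset.card_range, nsmul_eq_mul]; push_cast; ring
        _ = M := by rw [hc]; field_simp
    obtain ⟨A₀, hA₀mem, hA₀eq⟩ := Finset.exists_mem_eq_sup' hne cnt
    refine ⟨A₀, Finset.mem_powerset.mp hA₀mem, ?_⟩
    have : cnt A₀ = M := hA₀eq.symm
    calc (0.02:ℝ) * (Fintype.card V) / ((L:ℝ)+1) ≤ E := Elb
      _ ≤ M := Eub
      _ = cnt A₀ := hA₀eq
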